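/- arXiv:2505.07778 — 4 statements merged into one kernel-verified Lean document; each statement's English description precedes it below -/
import Mathlib

section
/- Let G be the graph on {0,1}^5 where distinct u, v are adjacent iff 1 ≤ d_H(u,v) ≤ 2. Then the independence number of G equals 4. -/
open SimpleGraph

def gilbert : SimpleGraph (Fin 5 → Bool) where
  Adj u v := 1 ≤ hammingDist u v ∧ hammingDist u v ≤ 2
  symm := ⟨fun u v h => ⟨hammingDist_comm v u ▸ h.1, hammingDist_comm v u ▸ h.2⟩⟩
  loopless := ⟨fun u h => by simpa [hammingDist_self] using h.1⟩

instance : DecidableRel gilbert.Adj :=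
  fun u v => inferInstanceAs (Decidable (1 ≤ hammingDist u v ∧ hammingDist u v ≤ 2))
/-- A set of vertices is independent if no two of its elements are adjacent. -/
def IsIndep {V : Type*} (G : SimpleGraph V) (s : Set V) : Prop :=
  s.Pairwise fun u v => ¬ G.Adj u v

/-- The independence number: the largest size of an independent set. -/
noncomputable def indepNum {V : Type*} [Fintype V] (G : SimpleGraph V) : ℕ :=
  sSup {n | ∃ s : Finset V, IsIndep G ↑s ∧ s.card = n}


set_option maxHeartbeats 4000000 in
lemma key : ∀ x y z : Fin 5 → Bool, x 4 = y 4 → z 4 = y 4 →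
    3 ≤ hammingDist x y → 3 ≤ hammingDist y z → hammingDist x z ≤ 2 := by decide

lemma dist_ge (x y : Fin 5 → Bool) (hne : x ≠ y) (h : ¬ gilbert.Adj x y) :
    3 ≤ hammingDist x y := by
  have h1 : 0 < hammingDist x y := hammingDist_pos.2 hne
  simp only [gilbert, not_and, not_le] at h
  omega

lemma upper (s : Finset (Fin 5 → Bool)) (hs : IsIndep gilbert ↑s) : s.card ≤ 4 := by
  by_contra h
  push_neg at h
  -- pigeonhole on last coordinate
  obtain ⟨b, hb⟩ : ∃ b : Bool, 2 < (s.filter (fun v => v 4 = b)).card := by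
    by_contra hc
    push_neg at hc
    have h1 := hc true
    have h2 := hc false
    have := Finset.card_filter_add_card_filter_not (s := s)
      (p := fun v => v 4 = true)
    have he : (s.filter (fun v => ¬ v 4 = true)).card
        = (s.filter (fun v => v 4 = false)).card := by
      congr 1
      apply Finset.filter_congr
      intro v _
      simp
    linarith
  obtain ⟨x, y, z, hx, hy, hz, hxy, hxz, hyz⟩ := Finset.two_lt_card_iff.1 hb
  simp only [Finset.mem_filter] at hx hy hz
  have dxy := dist_ge x y hxy (hs (Finset.mem_coe.2 hx.1) (Finset.mem_coe.2 hy.1) hxy)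
  have dyz := dist_ge y z hyz (hs (Finset.mem_coe.2 hy.1) (Finset.mem_coe.2 hz.1) hyz)
  have dxz := dist_ge x z hxz (hs (Finset.mem_coe.2 hx.1) (Finset.mem_coe.2 hz.1) hxz)
  have := key x y z (hx.2.trans hy.2.symm) (hz.2.trans hy.2.symm) dxy dyz
  linarith

def S : Finset (Fin 5 → Bool) :=
  {![false,false,false,false,false], ![true,true,true,false,false],
   ![false,false,true,true,true], ![true,true,false,true,true]}

lemma lower : IsIndep gilbert ↑S ∧ S.card = 4 := by
  constructor
  · intro u hu v hv huv
    simp only [Finset.coe_insert, Set.mem_insert_iff, Finset.coe_singleton,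
      Set.mem_singleton_iff, S] at hu hv
    rcases hu with h|h|h|h <;> rcases hv with h'|h'|h'|h' <;> subst h <;> subst h' <;>
      first | (exact absurd rfl huv) | decide
  · decide

theorem stmt2 : _root_.indepNum gilbert = 4 := by
  apply le_antisymm
  · apply csSup_le
    · exact ⟨4, S, lower⟩
    · rintro n ⟨s, hs, rfl⟩
      exact upper s hs
  · apply le_csSup
    · exact ⟨4, by rintro n ⟨s, hs, rfl⟩; exact upper s hs⟩
    · exact ⟨S, lower⟩
end

section
/- Let A be the 32×32 adjacency matrix of the graph G on {0,1}^5 where distinct u, v are adjacent iff 1 ≤ d_H(u,v) ≤ 2 (vertices ordered by the decimal value of their binary labels). Then the smallest eigenvalue of A equals -3. -/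
open SimpleGraph Matrix

/-- The binary representation of `i ∈ {0, …, 31}` as a 5-tuple of bits. -/
def bits (i : Fin 32) : Fin 5 → Bool := fun k => Nat.testBit i.val k.val

/-- Hamming distance between the binary labels of two indices. -/
def hd (i j : Fin 32) : ℕ := hammingDist (bits i) (bits j)

/-- The adjacency matrix of the Gilbert graph, vertices in decimal order. -/
def adjMat : Matrix (Fin 32) (Fin 32) ℝ :=
  fun i j => if 1 ≤ hd i j ∧ hd i j ≤ 2 then 1 else 0

/-- The explicit 32×32 symmetric matrix of the construction: entries equal `3`
on the antidiagonal (Hamming distance 5, i.e. `i + j = 33` with 1-based indexing),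
`-1` on adjacent pairs (Hamming distance 1 or 2), and `+1` otherwise. -/
def Xmat : Matrix (Fin 32) (Fin 32) ℝ :=
  fun i j => if hd i j = 5 then 3 else if 1 ≤ hd i j ∧ hd i j ≤ 2 then -1 else 1

/-- `B = A₁ + I` where `A₁` is the hypercube (distance-1) adjacency matrix. -/
def Bmat : Matrix (Fin 32) (Fin 32) ℝ := fun i j => if hd i j ≤ 1 then 1 else 0

def sgn (i : Fin 32) : ℤ :=
  (if bits i 0 then -1 else 1) * (if bits i 1 then -1 else 1) * (if bits i 2 then -1 else 1)

/-- The real character vector for `S = {0,1,2}`. -/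
def vvec : Fin 32 → ℝ := fun i => (sgn i : ℝ)

lemma count_key : ∀ i j : Fin 32,
    (Finset.univ.filter (fun k : Fin 32 => hd i k ≤ 1 ∧ hd k j ≤ 1)).card
      = (if 1 ≤ hd i j ∧ hd i j ≤ 2 then 2 else 0) + (if i = j then 6 else 0) := by decide

lemma vec_key : ∀ i : Fin 32, (∑ j : Fin 32, if hd i j ≤ 1 then sgn j else 0) = 0 := by decide

lemma hd_comm (i j : Fin 32) : hd i j = hd j i := hammingDist_comm _ _

lemma Bmat_herm : Bmatᴴ = Bmat := by
  ext i j
  simp [Bmat, Matrix.conjTranspose_apply, hd_comm i j]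

lemma BB : Bmat * Bmat = (2 : ℝ) • adjMat + (6 : ℝ) • (1 : Matrix (Fin 32) (Fin 32) ℝ) := by
  ext i j
  rw [Matrix.mul_apply]
  have h1 : ∀ k : Fin 32, Bmat i k * Bmat k j
      = if hd i k ≤ 1 ∧ hd k j ≤ 1 then (1 : ℝ) else 0 := by
    intro k
    simp only [Bmat, ite_and, ite_mul, one_mul, zero_mul, if_neg, mul_ite, mul_one, mul_zero]
    split_ifs <;> simp
  rw [Finset.sum_congr rfl fun k _ => h1 k, Finset.sum_boole]
  have h2 := count_key i j
  rw [h2]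
  simp only [Matrix.add_apply, Matrix.smul_apply, Matrix.one_apply, adjMat, smul_eq_mul]
  push_cast
  split_ifs <;> norm_num

lemma Bv : Bmat *ᵥ vvec = 0 := by
  funext i
  have h : (Bmat *ᵥ vvec) i = ((∑ j : Fin 32, if hd i j ≤ 1 then sgn j else 0 : ℤ) : ℝ) := by
    rw [Matrix.mulVec, dotProduct]
    push_cast
    refine Finset.sum_congr rfl fun j _ => ?_
    simp [Bmat, vvec, ite_mul, apply_ite (fun x : ℤ => (x : ℝ))]
  rw [h, vec_key]
  simp

lemma Av : adjMat *ᵥ vvec = (-3 : ℝ) • vvec := by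
  have h2 : ((2 : ℝ) • adjMat + (6 : ℝ) • (1 : Matrix (Fin 32) (Fin 32) ℝ)) *ᵥ vvec = 0 := by
    rw [← BB, ← Matrix.mulVec_mulVec, Bv, Matrix.mulVec_zero]
  rw [Matrix.add_mulVec, Matrix.smul_mulVec, Matrix.smul_mulVec,
    Matrix.one_mulVec] at h2
  have h3 : (2 : ℝ) • (adjMat *ᵥ vvec) = (2 : ℝ) • ((-3 : ℝ) • vvec) := by
    have h4 := eq_neg_of_add_eq_zero_left h2
    rw [h4, smul_smul]
    norm_num [neg_smul]
  exact smul_right_injective _ (two_ne_zero) h3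

lemma vvec_ne : vvec ≠ 0 := by
  intro h
  have : vvec 0 = 0 := congrFun h 0
  have h1 : sgn 0 = 1 := by decide
  rw [vvec, h1] at this
  norm_num at this

theorem stmt12 (hA : adjMat.IsHermitian) :
    IsLeast (Set.range hA.eigenvalues) (-3) := by
  constructor
  · -- -3 is an eigenvalue
    rw [← Matrix.IsHermitian.spectrum_real_eq_range_eigenvalues hA, spectrum.mem_iff]
    intro hu
    rw [Matrix.isUnit_iff_isUnit_det, isUnit_iff_ne_zero] at hu
    apply hu
    rw [← Matrix.exists_mulVec_eq_zero_iff]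
    refine ⟨vvec, vvec_ne, ?_⟩
    rw [Matrix.sub_mulVec, Av, Algebra.algebraMap_eq_smul_one, Matrix.smul_mulVec,
      Matrix.one_mulVec, sub_self]
  · -- lower bound
    rintro x ⟨i, rfl⟩
    set v : Fin 32 → ℝ := ⇑(hA.eigenvectorBasis i) with hv
    have hpsd : (Bmat * Bmat).PosSemidef := by
      have := Matrix.posSemidef_conjTranspose_mul_self Bmat
      rwa [Bmat_herm] at this
    have h0 : 0 ≤ dotProduct (star v) ((Bmat * Bmat) *ᵥ v) := hpsd.dotProduct_mulVec_nonneg v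
    have hnorm : dotProduct (star v) v = 1 := by
      have h1 : ‖hA.eigenvectorBasis i‖ = 1 := hA.eigenvectorBasis.orthonormal.1 i
      have h2 : (inner ℝ (hA.eigenvectorBasis i) (hA.eigenvectorBasis i) : ℝ) = 1 := by
        rw [real_inner_self_eq_norm_sq, h1]; norm_num
      rw [← h2, EuclideanSpace.inner_eq_star_dotProduct]
      exact dotProduct_comm _ _
    have hBBv : (Bmat * Bmat) *ᵥ v = (2 * hA.eigenvalues i + 6) • v := by
      rw [BB, Matrix.add_mulVec, Matrix.smul_mulVec, Matrix.smul_mulVec,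
        Matrix.one_mulVec, hA.mulVec_eigenvectorBasis, smul_smul, ← add_smul]
    rw [hBBv, dotProduct_smul, hnorm, smul_eq_mul, mul_one] at h0
    linarith
end

section
/- Let G be a d-regular graph on n vertices with adjacency matrix A, let λ_n be the smallest eigenvalue of A, and suppose d > 0 and λ_n < 0. If S is an independent set of G, then |S| ≤ -n·λ_n/(d - λ_n). -/
set_option maxHeartbeats 1000000 in
open Matrix in
theorem stmt13 {V : Type*} [Fintype V] [DecidableEq V] (G : SimpleGraph V)
    [DecidableRel G.Adj] (d n : ℕ) (hn : Fintype.card V = n)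
    (hreg : G.IsRegularOfDegree d) (hd : 0 < d)
    (hA : (SimpleGraph.adjMatrix ℝ G).IsHermitian) (lam : ℝ)
    (hlam : IsLeast (Set.range hA.eigenvalues) lam) (hneg : lam < 0)
    (s : Finset V) (hs : IsIndep G ↑s) :
    (s.card : ℝ) ≤ -(n : ℝ) * lam / ((d : ℝ) - lam) := by
  set A := SimpleGraph.adjMatrix ℝ G with hAdef
  have hdlam : (0:ℝ) < (d : ℝ) - lam := by
    have : (0:ℝ) < (d:ℝ) := by exact_mod_cast hd
    linarith
  -- trivial case : empty independent set
  rcases Nat.eq_zero_or_pos s.card with hk0 | hkpos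
  · rw [hk0]
    push_cast
    apply div_nonneg _ hdlam.le
    have : (0:ℝ) ≤ (n:ℝ) := by positivity
    nlinarith
  have hcard : s.card ≤ n := hn ▸ (Finset.card_le_card (Finset.subset_univ s)).trans_eq
    Finset.card_univ
  have hNpos : (0:ℝ) < (n:ℝ) := by
    have : 0 < n := lt_of_lt_of_le hkpos hcard
    exact_mod_cast this
  -- positive semidefiniteness of A - lam • 1
  have hPSD : (A - lam • (1 : Matrix V V ℝ)).PosSemidef := by
    have hUU : (hA.eigenvectorUnitary : Matrix V V ℝ) *
        star (hA.eigenvectorUnitary : Matrix V V ℝ) = 1 :=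
      Matrix.mem_unitaryGroup_iff.mp hA.eigenvectorUnitary.2
    have hkey : A - lam • (1 : Matrix V V ℝ) =
        (hA.eigenvectorUnitary : Matrix V V ℝ) *
          Matrix.diagonal (fun i => hA.eigenvalues i - lam) *
          (hA.eigenvectorUnitary : Matrix V V ℝ)ᴴ := by
      have hD : Matrix.diagonal (fun i => hA.eigenvalues i - lam) =
          Matrix.diagonal (RCLike.ofReal ∘ hA.eigenvalues) - lam • (1 : Matrix V V ℝ) := by
        ext i j
        by_cases h : i = j <;>
          simp [Matrix.diagonal_apply, Matrix.one_apply, h]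
      rw [hD, Matrix.mul_sub, Matrix.sub_mul, ← Matrix.star_eq_conjTranspose, ← Unitary.conjStarAlgAut_apply (S := ℝ), ← hA.spectral_theorem]
      congr 1
      rw [Matrix.mul_smul, Matrix.smul_mul, Matrix.mul_one]
      congr 1
      exact hUU.symm
    rw [hkey]
    refine (Matrix.posSemidef_diagonal_iff.mpr fun i => ?_).mul_mul_conjTranspose_same _
    have := hlam.2 ⟨i, rfl⟩
    linarith
  -- set up the test vector
  set k : ℝ := (s.card : ℝ) with hkdef
  set N : ℝ := (n : ℝ) with hNdef
  set c : ℝ := k / N with hcdef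
  have hc : c * N = k := div_mul_cancel₀ _ hNpos.ne'
  set e : V → ℝ := fun v => if v ∈ s then 1 else 0 with hedef
  set o : V → ℝ := Function.const V (1:ℝ) with hodef
  set x : V → ℝ := e - c • o with hxdef
  -- basic dot products
  have hAo : A *ᵥ o = fun _ => (d : ℝ) := by
    funext v
    rw [hAdef]
    rw [SimpleGraph.adjMatrix_mulVec_const_apply_of_regular hreg]
    simp
  have hee : e ⬝ᵥ e = k := by
    simp only [dotProduct, hedef]
    rw [Finset.sum_congr rfl (fun v _ => by
      by_cases h : v ∈ s <;> simp [h] : ∀ v ∈ Finset.univ,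
        (if v ∈ s then (1:ℝ) else 0) * (if v ∈ s then (1:ℝ) else 0)
          = if v ∈ s then 1 else 0)]
    simp [hkdef]
  have heo : e ⬝ᵥ o = k := by
    simp [dotProduct, hedef, hodef, hkdef]
  have hoe : o ⬝ᵥ e = k := by rw [dotProduct_comm]; exact heo
  have hoo : o ⬝ᵥ o = N := by
    simp [dotProduct, hodef, hNdef, ← hn]
  have heAe : e ⬝ᵥ (A *ᵥ e) = 0 := by
    simp only [dotProduct]
    refine Finset.sum_eq_zero fun v _ => ?_
    by_cases hv : v ∈ s
    · have : (A *ᵥ e) v = 0 := by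
        rw [hAdef, SimpleGraph.adjMatrix_mulVec_apply]
        refine Finset.sum_eq_zero fun u hu => ?_
        rw [SimpleGraph.mem_neighborFinset] at hu
        have hus : u ∉ s := by
          intro hus
          exact hs hv hus (G.ne_of_adj hu) hu
        simp [hedef, hus]
      rw [this, mul_zero]
    · simp [hedef, hv]
  have heAo : e ⬝ᵥ (A *ᵥ o) = k * d := by
    rw [hAo]
    simp [dotProduct, hedef, hkdef, Finset.sum_ite, mul_comm]
  have hoAe : o ⬝ᵥ (A *ᵥ e) = d * k := by
    rw [Matrix.dotProduct_mulVec]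
    have hvm : o ᵥ* A = fun _ => (d : ℝ) := by
      funext v
      rw [hAdef, SimpleGraph.adjMatrix_vecMul_apply]
      simp only [hodef, Function.const_apply, Finset.sum_const, nsmul_eq_mul, mul_one]
      rw [SimpleGraph.card_neighborFinset_eq_degree, hreg v]
    rw [hvm]
    have : (fun _ => (d:ℝ)) ⬝ᵥ e = k * d := by
      simp [dotProduct, hedef, hkdef, Finset.sum_ite, mul_comm]
    rw [this]; ring
  have hoAo : o ⬝ᵥ (A *ᵥ o) = N * d := by
    rw [hAo]
    simp [dotProduct, hodef, hNdef, ← hn, mul_comm]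
  -- the quadratic form inequality
  have hq := hPSD.dotProduct_mulVec_nonneg x
  have hstar : star x = x := by simp
  rw [hstar, Matrix.sub_mulVec, dotProduct_sub] at hq
  have h1 : x ⬝ᵥ (A *ᵥ x) = -2 * c * (d * k) + c * c * (N * d) := by
    rw [hxdef]
    rw [Matrix.mulVec_sub, Matrix.mulVec_smul]
    rw [sub_dotProduct, dotProduct_sub, dotProduct_sub,
      smul_dotProduct, smul_dotProduct, dotProduct_smul,
      dotProduct_smul]
    rw [heAe, heAo, hoAe, hoAo]
    simp only [smul_eq_mul]
    ring
  have h2 : x ⬝ᵥ ((lam • (1 : Matrix V V ℝ)) *ᵥ x) = lam * (k - 2 * c * k + c * c * N) := by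
    rw [Matrix.smul_mulVec, Matrix.one_mulVec, dotProduct_smul]
    have : x ⬝ᵥ x = k - 2 * c * k + c * c * N := by
      rw [hxdef]
      rw [sub_dotProduct, dotProduct_sub, dotProduct_sub,
        smul_dotProduct, smul_dotProduct, dotProduct_smul,
        dotProduct_smul]
      rw [hee, heo, hoe, hoo]
      simp only [smul_eq_mul]
      ring
    rw [this]
    simp
  rw [h1, h2] at hq
  -- final arithmetic
  rw [le_div_iff₀ hdlam]
  have hkR : (0:ℝ) < k := by rw [hkdef]; exact_mod_cast hkpos
  have hck : c * k ≤ k := by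
    have hc1 : c ≤ 1 := by
      rw [hcdef, div_le_one hNpos, hkdef, hNdef]
      exact_mod_cast hcard
    nlinarith
  have hcpos : 0 < c := div_pos hkR hNpos
  -- from hq : 0 ≤ -2cdk + ccNd - lam(k - 2ck + ccN), with cN = k
  have h3 : c * c * N = c * k := by rw [mul_assoc, hc]
  have h4 : c * c * (N * (d:ℝ)) = c * k * d := by
    rw [show c * c * (N * (d:ℝ)) = c * c * N * (d:ℝ) by ring, h3]
  have h5 : lam * (c * c * N) = lam * (c * k) := by rw [h3]
  have hq' : lam * (k - c * k) ≤ -(c * d * k) := by nlinarith [hq, h4, h5]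
  -- divide by k : lam * (1 - c) ≤ -(c*d), then multiply by N
  have hfin : c * ((d:ℝ) - lam) ≤ -lam := by nlinarith
  calc k * ((d:ℝ) - lam) = (c * ((d:ℝ) - lam)) * N := by rw [← hc]; ring
    _ ≤ -lam * N := by nlinarith
    _ = -N * lam := by ring
end

section
/- Let X be the 32×32 real symmetric matrix whose diagonal entries are 1, whose antidiagonal entries X_{i,j} with i + j = 33 equal 3, and whose other entries are ±1 as specified by the explicit matrix [X_l, X_r] from the construction (all entries of X belong to {-1, +1, +3}, with X_{i,j} = 3 iff i + j = 33). Then the largest eigenvalue of X equals 4. -/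
open SimpleGraph

open Matrix in
def g (i j : Fin 32) : ℤ :=
  if hd i j = 5 then 3 else if 1 ≤ hd i j ∧ hd i j ≤ 2 then -1 else 1

lemma Xmat_g (i j : Fin 32) : Xmat i j = (g i j : ℝ) := by
  unfold Xmat g; split_ifs <;> norm_num

set_option maxHeartbeats 1000000 in
lemma gkey : ∀ i j : Fin 32, (∑ k, g i k * g k j) + 8 * g i j
    = 48 * (if i = j then 1 else 0) := by decide

lemma key_s15 : Xmat * Xmat + (8:ℝ) • Xmat = (48:ℝ) • (1 : Matrix (Fin 32) (Fin 32) ℝ) := by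
  ext i j
  have := gkey i j
  have h2 : ((∑ k, g i k * g k j : ℤ) : ℝ) + 8 * (g i j : ℝ)
      = 48 * (if i = j then 1 else 0) := by
    split_ifs with hij <;> simp [hij] at this ⊢ <;> exact_mod_cast this
  simp only [Matrix.add_apply, Matrix.mul_apply, Matrix.smul_apply, Matrix.one_apply,
    Xmat_g, smul_eq_mul]
  rw [← h2]; push_cast; ring

lemma diag_one (i : Fin 32) : Xmat i i = 1 := by
  have : hd i i = 0 := by simp [hd]
  simp [Xmat, this]

lemma trace_X : Matrix.trace Xmat = 32 := by
  simp [Matrix.trace, Matrix.diag, diag_one]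

lemma eig_quad (hX : Xmat.IsHermitian) (i : Fin 32) :
    hX.eigenvalues i = 4 ∨ hX.eigenvalues i = -12 := by
  set μ := hX.eigenvalues i with hμ
  set v := ⇑(hX.eigenvectorBasis i) with hv
  have hv0 : v ≠ 0 := fun h => hX.eigenvectorBasis.orthonormal.ne_zero i
    (WithLp.ofLp_injective 2 (h.trans rfl))
  have hmv : Xmat.mulVec v = μ • v := hX.mulVec_eigenvectorBasis i
  have h1 : (Xmat * Xmat + (8:ℝ) • Xmat).mulVec v
      = ((48:ℝ) • (1 : Matrix (Fin 32) (Fin 32) ℝ)).mulVec v := by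
    rw [key_s15]
  have h2 : (μ * μ + 8 * μ) • v = (48:ℝ) • v := by
    rw [Matrix.add_mulVec, Matrix.smul_mulVec, Matrix.smul_mulVec,
      Matrix.one_mulVec, ← Matrix.mulVec_mulVec, hmv, Matrix.mulVec_smul, hmv] at h1
    rw [← h1, smul_smul]
    module
  have h3 : μ * μ + 8 * μ = 48 := by
    by_contra h
    exact hv0 (by
      have := sub_eq_zero.mpr h2
      rw [← sub_smul] at this
      exact (smul_eq_zero.mp this).resolve_left (sub_ne_zero.mpr h))
  have : (μ - 4) * (μ + 12) = 0 := by nlinarith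
  rcases mul_eq_zero.mp this with h | h
  · left; linarith
  · right; linarith

lemma trace_eq_sum (hX : Xmat.IsHermitian) :
    Matrix.trace Xmat = ∑ i, hX.eigenvalues i := by
  simpa using hX.trace_eq_sum_eigenvalues

theorem stmt15 (hX : Xmat.IsHermitian) :
    IsGreatest (Set.range hX.eigenvalues) 4 := by
  constructor
  · by_contra h
    have hall : ∀ i, hX.eigenvalues i = -12 := by
      intro i
      rcases eig_quad hX i with h4 | h12
      · exact absurd ⟨i, h4⟩ h
      · exact h12
    have := trace_eq_sum hX
    rw [trace_X] at this
    simp [hall] at this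
    norm_num at this
  · rintro x ⟨i, rfl⟩
    rcases eig_quad hX i with h | h <;> rw [h] <;> norm_num
end
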